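/- Localization estimate (inequality (2.2), case q > 2). Let n ≥ 1, q > 2, s ∈ (0,1). Let Ω₁ ⊆ Ω₂ ⊆ ℝⁿ with Ω₁ bounded and δ := dist(Ω₁, ℝⁿ \ Ω₂) > 0. Let u : ℝⁿ → ℝ be measurable with ∫_{ℝⁿ} |u(y)|^{q−1}/(1 + |y|^{n+sq}) dy < ∞, let χ : ℝⁿ → [0,1] be measurable with χ = 1 on Ω₂, and set w = χu. Then there exists κ > 0, depending only on n, q, s, δ and sup_{x ∈ Ω₁}|x|, such that for every x ∈ Ω₁: the function z ↦ J_q(u(x) − u(x+z)) − J_q(u(x) − w(x+z)) vanishes for |z| < δ, and ∫_{|z| ≥ δ} |J_q(u(x) − u(x+z)) − J_q(u(x) − w(x+z))| |z|^{−(n+sq)} dz ≤ κ ( |u(x)|^{q−1} + ∫_{ℝⁿ} |u(y)|^{q−1}/(1 + |y|^{n+sq}) dy ). -/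

import Mathlib

open MeasureTheory Metric

noncomputable section

/-- `J_q(t) = |t|^{q-2} t`. -/
def Jq (q t : ℝ) : ℝ := |t| ^ (q - 2) * t

lemma abs_Jq (q t : ℝ) (hq : 2 < q) : |Jq q t| = |t| ^ (q - 1) := by
  rcases eq_or_ne t 0 with rfl | ht
  · simp [Jq, Real.zero_rpow (by intro h; linarith : q - 1 ≠ 0)]
  · have h0 : (0:ℝ) < |t| := abs_pos.mpr ht
    rw [Jq, abs_mul, abs_of_nonneg (Real.rpow_nonneg (abs_nonneg t) _)]
    calc |t| ^ (q-2) * |t| = |t| ^ (q-2) * |t| ^ (1:ℝ) := by rw [Real.rpow_one]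
      _ = |t| ^ ((q-2)+1) := (Real.rpow_add h0 _ _).symm
      _ = |t| ^ (q-1) := by ring_nf

lemma two_rpow_bound (a b p : ℝ) (ha : 0 ≤ a) (hb : 0 ≤ b) (hp : 0 ≤ p) :
    (a + b) ^ p ≤ 2 ^ p * (a ^ p + b ^ p) := by
  have h1 : a + b ≤ 2 * max a b := by
    rcases le_total a b with h | h
    · rw [max_eq_right h]; linarith
    · rw [max_eq_left h]; linarith
  have h2 : (max a b) ^ p ≤ a ^ p + b ^ p := by
    rcases le_total a b with h | h
    · rw [max_eq_right h]
      exact le_add_of_nonneg_left (Real.rpow_nonneg ha p)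
    · rw [max_eq_left h]
      exact le_add_of_nonneg_right (Real.rpow_nonneg hb p)
  calc (a+b)^p ≤ (2 * max a b)^p :=
        Real.rpow_le_rpow (by positivity) h1 hp
    _ = 2^p * (max a b)^p :=
        Real.mul_rpow (by norm_num) (le_max_iff.mpr (Or.inl ha))
    _ ≤ 2^p * (a^p + b^p) := by
        have : (0:ℝ) ≤ 2^p := Real.rpow_nonneg (by norm_num) p
        exact mul_le_mul_of_nonneg_left h2 this
set_option maxHeartbeats 2000000 in
/-- **Localization estimate** (inequality (2.2), case `q > 2`). Here `w = χ u` and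
`δ ≤ dist(Ω₁, Ω₂ᶜ)` with `δ > 0`, `Ω₁` bounded (with `‖x‖ ≤ R` on `Ω₁`). -/
theorem localization_estimate_q_gt_two
    (n : ℕ) (hn : 1 ≤ n) (q s δ R : ℝ)
    (hq : 2 < q) (hs : s ∈ Set.Ioo (0 : ℝ) 1) (hδ : 0 < δ)
    (Ω₁ Ω₂ : Set (EuclideanSpace ℝ (Fin n))) (hsub : Ω₁ ⊆ Ω₂)
    (hbd : ∀ x ∈ Ω₁, ‖x‖ ≤ R)
    (hsep : ∀ x ∈ Ω₁, ∀ y : EuclideanSpace ℝ (Fin n), y ∉ Ω₂ → δ ≤ dist x y)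
    (u : EuclideanSpace ℝ (Fin n) → ℝ) (hu : Measurable u)
    (htail : Integrable (fun y : EuclideanSpace ℝ (Fin n) =>
        |u y| ^ (q - 1) / (1 + ‖y‖ ^ ((n : ℝ) + s * q))))
    (χ : EuclideanSpace ℝ (Fin n) → ℝ) (hχmeas : Measurable χ)
    (hχ : ∀ x, χ x ∈ Set.Icc (0 : ℝ) 1) (hχ1 : ∀ x ∈ Ω₂, χ x = 1) :
    ∃ κ > (0 : ℝ), ∀ x ∈ Ω₁,
      (∀ z : EuclideanSpace ℝ (Fin n), ‖z‖ < δ →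
        Jq q (u x - u (x + z)) - Jq q (u x - χ (x + z) * u (x + z)) = 0) ∧
      ∫⁻ z in {z : EuclideanSpace ℝ (Fin n) | δ ≤ ‖z‖},
          ENNReal.ofReal
            (|Jq q (u x - u (x + z)) - Jq q (u x - χ (x + z) * u (x + z))| /
              ‖z‖ ^ ((n : ℝ) + s * q))
        ≤ ENNReal.ofReal (κ * (|u x| ^ (q - 1) +
            ∫ y : EuclideanSpace ℝ (Fin n),
              |u y| ^ (q - 1) / (1 + ‖y‖ ^ ((n : ℝ) + s * q)))) := by
  obtain ⟨hs0, hs1⟩ := hs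
  set p : ℝ := (n : ℝ) + s * q with hpdef
  have hn1 : (1:ℝ) ≤ (n:ℝ) := by exact_mod_cast hn
  have hq0 : (0:ℝ) < q := by linarith
  have hsq : 0 < s * q := mul_pos hs0 hq0
  have hp1 : (1:ℝ) ≤ p := by simp only [hpdef]; linarith
  have hp0 : (0:ℝ) < p := by linarith
  have hq1 : (0:ℝ) ≤ q - 1 := by linarith
  set R' : ℝ := max R 0 with hR'def
  have hR'0 : 0 ≤ R' := le_max_right _ _
  have hδp : 0 < δ ^ p := Real.rpow_pos_of_pos hδ p
  have h2p : (0:ℝ) < 2 ^ p := Real.rpow_pos_of_pos (by norm_num) p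
  have hR'p : (0:ℝ) ≤ R' ^ p := Real.rpow_nonneg hR'0 p
  set K : ℝ := 2 * 2 ^ (q - 1) with hKdef
  have hK0 : 0 < K := by positivity
  set A : ℝ := K * (1 + δ ^ p) / δ ^ p with hAdef
  have hA0 : 0 < A := by positivity
  set C : ℝ := (1 + 2 ^ p * δ ^ p + 2 ^ p * R' ^ p) / δ ^ p with hCdef
  have hC0 : 0 < C := by positivity
  set B : ℝ := K * C with hBdef
  have hB0 : 0 < B := by positivity
  -- integrability of (1 + ‖z‖^p)⁻¹
  have hf0meas : Measurable fun z : EuclideanSpace ℝ (Fin n) => (1 + ‖z‖ ^ p)⁻¹ := by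
    fun_prop
  have hf0int : Integrable fun z : EuclideanSpace ℝ (Fin n) => (1 + ‖z‖ ^ p)⁻¹ := by
    have hInt : Integrable (fun z : EuclideanSpace ℝ (Fin n) => (1 + ‖z‖) ^ (-p)) := by
      apply integrable_one_add_norm
      rw [finrank_euclideanSpace_fin]
      simp only [hpdef]; linarith
    refine (hInt.const_mul (2 ^ p)).mono' hf0meas.aestronglyMeasurable
      (Filter.Eventually.of_forall fun z => ?_)
    have hz0 : (0:ℝ) ≤ ‖z‖ := norm_nonneg z
    have h1z : (0:ℝ) < 1 + ‖z‖ ^ p := by positivity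
    have hb : (1 + ‖z‖) ^ p ≤ 2 ^ p * (1 + ‖z‖ ^ p) := by
      have := two_rpow_bound 1 ‖z‖ p (by norm_num) hz0 hp0.le
      simpa using this
    rw [Real.norm_eq_abs, abs_of_nonneg (by positivity)]
    rw [Real.rpow_neg (by positivity), ← div_eq_mul_inv, le_div_iff₀ (by positivity),
      inv_mul_le_iff₀ h1z]
    linarith [hb]
  set I₀ : ℝ := ∫ z : EuclideanSpace ℝ (Fin n), (1 + ‖z‖ ^ p)⁻¹ with hI0def
  have hI00 : 0 ≤ I₀ := integral_nonneg fun z => by positivity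
  set T : ℝ := ∫ y : EuclideanSpace ℝ (Fin n), |u y| ^ (q - 1) / (1 + ‖y‖ ^ p) with hTdef
  have hT0 : 0 ≤ T := integral_nonneg fun y => by positivity
  refine ⟨A * I₀ + B + 1, by positivity, fun x hx => ?_⟩
  have hxR : ‖x‖ ≤ R' := (hbd x hx).trans (le_max_left _ _)
  -- membership lemma
  have hmem : ∀ z : EuclideanSpace ℝ (Fin n), ‖z‖ < δ → x + z ∈ Ω₂ := by
    intro z hz
    by_contra h
    have := hsep x hx (x + z) h
    rw [dist_self_add_right] at this
    linarith
  constructor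
  · intro z hz
    rw [hχ1 _ (hmem z hz), one_mul, sub_self]
  -- the integral estimate
  have key : ∀ z : EuclideanSpace ℝ (Fin n), δ ≤ ‖z‖ →
      |Jq q (u x - u (x + z)) - Jq q (u x - χ (x + z) * u (x + z))| / ‖z‖ ^ p
        ≤ A * |u x| ^ (q - 1) * (1 + ‖z‖ ^ p)⁻¹
          + B * (|u (x + z)| ^ (q - 1) / (1 + ‖x + z‖ ^ p)) := by
    intro z hz
    set t : ℝ := ‖z‖ with htdef
    have ht0 : 0 < t := lt_of_lt_of_le hδ hz
    have htp : 0 < t ^ p := Real.rpow_pos_of_pos ht0 p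
    have hδt : δ ^ p ≤ t ^ p := Real.rpow_le_rpow hδ.le hz hp0.le
    set m : ℝ := |u x| ^ (q - 1) with hmdef
    set m₂ : ℝ := |u (x + z)| ^ (q - 1) with hm2def
    have hm0 : 0 ≤ m := Real.rpow_nonneg (abs_nonneg _) _
    have hm20 : 0 ≤ m₂ := Real.rpow_nonneg (abs_nonneg _) _
    have hY : ‖x + z‖ ≤ t + R' := by
      calc ‖x + z‖ ≤ ‖x‖ + ‖z‖ := norm_add_le x z
        _ ≤ R' + t := by gcongr
        _ = t + R' := by ring
    have hYp : ‖x + z‖ ^ p ≤ 2 ^ p * (t ^ p + R' ^ p) :=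
      le_trans (Real.rpow_le_rpow (norm_nonneg _) hY hp0.le)
        (two_rpow_bound t R' p ht0.le hR'0 hp0.le)
    have hYpos : (0:ℝ) < 1 + ‖x + z‖ ^ p := by positivity
    -- numerator bound
    have hnum : |Jq q (u x - u (x + z)) - Jq q (u x - χ (x + z) * u (x + z))|
        ≤ K * (m + m₂) := by
      have habs1 : |u x - u (x + z)| ≤ |u x| + |u (x + z)| := abs_sub _ _
      have hχz := hχ (x + z)
      have habs2 : |u x - χ (x + z) * u (x + z)| ≤ |u x| + |u (x + z)| := by
        refine (abs_sub _ _).trans ?_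
        have : |χ (x + z) * u (x + z)| ≤ |u (x + z)| := by
          rw [abs_mul]
          have h1 : |χ (x + z)| ≤ 1 := abs_le.mpr ⟨by linarith [hχz.1], hχz.2⟩
          nlinarith [abs_nonneg (u (x + z))]
        linarith
      have hsplit : (|u x| + |u (x + z)|) ^ (q - 1) ≤ 2 ^ (q - 1) * (m + m₂) := by
        have := two_rpow_bound |u x| |u (x + z)| (q - 1) (abs_nonneg _) (abs_nonneg _) hq1
        simpa [hmdef, hm2def, mul_add] using this
      have h1 : |Jq q (u x - u (x + z))| ≤ 2 ^ (q - 1) * (m + m₂) := by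
        rw [abs_Jq q _ hq]
        exact le_trans (Real.rpow_le_rpow (abs_nonneg _) habs1 hq1) hsplit
      have h2 : |Jq q (u x - χ (x + z) * u (x + z))| ≤ 2 ^ (q - 1) * (m + m₂) := by
        rw [abs_Jq q _ hq]
        exact le_trans (Real.rpow_le_rpow (abs_nonneg _) habs2 hq1) hsplit
      calc |Jq q (u x - u (x + z)) - Jq q (u x - χ (x + z) * u (x + z))|
          ≤ |Jq q (u x - u (x + z))| + |Jq q (u x - χ (x + z) * u (x + z))| :=
            abs_sub (Jq q (u x - u (x + z))) (Jq q (u x - χ (x + z) * u (x + z)))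
        _ ≤ K * (m + m₂) := by rw [hKdef, mul_assoc]; linarith
    have step1 : |Jq q (u x - u (x + z)) - Jq q (u x - χ (x + z) * u (x + z))| / t ^ p
        ≤ K * m / t ^ p + K * m₂ / t ^ p := by
      rw [← add_div]
      gcongr
      nlinarith [hnum]
    have h1t : (0:ℝ) < 1 + t ^ p := by positivity
    have step2 : K * m / t ^ p ≤ A * m * (1 + t ^ p)⁻¹ := by
      have heq : A * m * (1 + t ^ p)⁻¹ = K * (1 + δ ^ p) * m / (δ ^ p * (1 + t ^ p)) := by
        rw [hAdef]; field_simp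
      rw [heq, div_le_div_iff₀ htp (by positivity)]
      nlinarith [mul_le_mul_of_nonneg_left hδt (mul_nonneg hK0.le hm0)]
    have step3 : K * m₂ / t ^ p ≤ B * (m₂ / (1 + ‖x + z‖ ^ p)) := by
      have heq : B * (m₂ / (1 + ‖x + z‖ ^ p)) =
          K * (1 + 2 ^ p * δ ^ p + 2 ^ p * R' ^ p) * m₂ / (δ ^ p * (1 + ‖x + z‖ ^ p)) := by
        rw [hBdef, hCdef]; field_simp
      rw [heq, div_le_div_iff₀ htp (by positivity)]
      nlinarith [mul_le_mul_of_nonneg_left hYp (mul_nonneg (mul_nonneg hK0.le hm20) hδp.le),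
        mul_le_mul_of_nonneg_left hδt (mul_nonneg hK0.le hm20),
        mul_le_mul_of_nonneg_left hδt
          (mul_nonneg (mul_nonneg (mul_nonneg hK0.le hm20) h2p.le) hR'p)]
    calc |Jq q (u x - u (x + z)) - Jq q (u x - χ (x + z) * u (x + z))| / t ^ p
        ≤ K * m / t ^ p + K * m₂ / t ^ p := step1
      _ ≤ A * m * (1 + t ^ p)⁻¹ + B * (m₂ / (1 + ‖x + z‖ ^ p)) := add_le_add step2 step3
  -- now the lintegral chain
  set g₁ : EuclideanSpace ℝ (Fin n) → ℝ := fun z => A * |u x| ^ (q - 1) * (1 + ‖z‖ ^ p)⁻¹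
    with hg₁def
  set g₂ : EuclideanSpace ℝ (Fin n) → ℝ :=
    fun z => B * (|u (x + z)| ^ (q - 1) / (1 + ‖x + z‖ ^ p)) with hg₂def
  have hg₁meas : Measurable g₁ := by fun_prop
  have hg₂meas : Measurable g₂ := by
    apply Measurable.const_mul
    apply Measurable.div
    · exact ((hu.comp (measurable_const_add x)).abs.pow_const _)
    · fun_prop
  have hg₁int : Integrable g₁ := (hf0int.const_mul _)
  have hmeasG : Measurable fun z => ENNReal.ofReal (g₁ z) + ENNReal.ofReal (g₂ z) :=
    (hg₁meas.ennreal_ofReal).add (hg₂meas.ennreal_ofReal)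
  calc ∫⁻ z in {z : EuclideanSpace ℝ (Fin n) | δ ≤ ‖z‖},
          ENNReal.ofReal
            (|Jq q (u x - u (x + z)) - Jq q (u x - χ (x + z) * u (x + z))| / ‖z‖ ^ p)
      ≤ ∫⁻ z in {z : EuclideanSpace ℝ (Fin n) | δ ≤ ‖z‖},
          (ENNReal.ofReal (g₁ z) + ENNReal.ofReal (g₂ z)) := by
        refine setLIntegral_mono hmeasG fun z hz => ?_
        refine le_trans (ENNReal.ofReal_le_ofReal (key z hz)) ?_
        exact ENNReal.ofReal_add_le
    _ ≤ ∫⁻ z, (ENNReal.ofReal (g₁ z) + ENNReal.ofReal (g₂ z)) :=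
        setLIntegral_le_lintegral _ _
    _ = (∫⁻ z, ENNReal.ofReal (g₁ z)) + ∫⁻ z, ENNReal.ofReal (g₂ z) :=
        lintegral_add_left hg₁meas.ennreal_ofReal _
    _ = ENNReal.ofReal (A * |u x| ^ (q - 1) * I₀) + ENNReal.ofReal (B * T) := by
        congr 1
        · rw [← ofReal_integral_eq_lintegral_ofReal hg₁int
            (Filter.Eventually.of_forall fun z => by positivity)]
          rw [hg₁def, hI0def]
          congr 1
          exact integral_const_mul _ _
        · have htrans : (∫⁻ z, ENNReal.ofReal (g₂ z)) =
              ∫⁻ y, ENNReal.ofReal (B * (|u y| ^ (q - 1) / (1 + ‖y‖ ^ p))) := by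
            exact lintegral_add_left_eq_self
              (fun y => ENNReal.ofReal (B * (|u y| ^ (q - 1) / (1 + ‖y‖ ^ p)))) x
          rw [htrans, ← ofReal_integral_eq_lintegral_ofReal (htail.const_mul B)
            (Filter.Eventually.of_forall fun y => by positivity)]
          rw [hTdef]
          congr 1
          exact integral_const_mul _ _
    _ ≤ ENNReal.ofReal ((A * I₀ + B + 1) * (|u x| ^ (q - 1) + T)) := by
        rw [← ENNReal.ofReal_add (by positivity) (by positivity)]
        apply ENNReal.ofReal_le_ofReal
        have hm0 : (0:ℝ) ≤ |u x| ^ (q - 1) := Real.rpow_nonneg (abs_nonneg _) _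
        nlinarith [mul_nonneg (mul_nonneg hA0.le hI00) hm0, mul_nonneg hB0.le hT0,
          mul_nonneg hA0.le (mul_nonneg hI00 hT0), mul_nonneg hB0.le hm0]
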